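/- Let S ≥ 1, D > 0, n ≥ 1. Let p̂ ∈ Δ^S be the average of n i.i.d. multinoulli trials with parameter p ∈ Δ^S. Define Δ_i := √( 3·p̂_i·log(4S)/n ) + 3·log(4S)/n, p⁻ := p̂ − Δ (coordinatewise), and let z be a random vector picked uniformly at random from the standard basis vectors {e_1, …, e_S}, independently of the trials; set p̃ := p⁻ + (1 − Σ_{i=1}^S p⁻_i)·z. Then for any fixed h ∈ [0,D]^S, Pr( p̃ᵀh ≥ pᵀh ) ≥ 1/(2S). -/

import Mathlib

open MeasureTheory ProbabilityTheory Finset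

noncomputable section

/-- Law of a `Dirichlet(α)` random vector: the law of `(X i / ∑ j, X j) i` where the `X i`
are independent with `X i ~ Gamma (α i) 1`. -/
def dirichletLaw {S : ℕ} (α : Fin S → ℝ) : Measure (Fin S → ℝ) :=
  (Measure.pi fun i => gammaMeasure (α i) 1).map (fun x i => x i / ∑ j, x j)

/-- The categorical (multinoulli) measure on `Fin S` with parameter `p`. -/
def catMeasure {S : ℕ} (p : Fin S → ℝ) : Measure (Fin S) :=
  ∑ i : Fin S, ENNReal.ofReal (p i) • Measure.dirac i

/-- Joint law of `n` i.i.d. multinoulli trials with parameter `p`. -/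
def trialsLaw {S : ℕ} (p : Fin S → ℝ) (n : ℕ) : Measure (Fin n → Fin S) :=
  Measure.pi fun _ : Fin n => catMeasure p

/-- The empirical distribution (the average `p̂` of the `n` multinoulli trials `x`). -/
def empDist {S n : ℕ} (x : Fin n → Fin S) (i : Fin S) : ℝ :=
  ((Finset.univ.filter fun j => x j = i).card : ℝ) / (n : ℝ)

/-- The downward-shifted empirical estimate `p⁻ i = p̂ i - Δ i` used in simple
optimistic sampling. -/
def pminus {S n : ℕ} (x : Fin n → Fin S) (i : Fin S) : ℝ :=
  empDist x i - (Real.sqrt (3 * empDist x i * Real.log (4 * S) / n) + 3 * Real.log (4 * S) / n)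

/-- The simple optimistic sample: `p̃ = p⁻ + (1 - ∑ i, p⁻ i) • e_z` where `z` is the extra
uniformly random coordinate. -/
def ptilde {S n : ℕ} (x : Fin n → Fin S) (z : Fin S) (i : Fin S) : ℝ :=
  pminus x i + (1 - ∑ j, pminus x j) * (if i = z then 1 else 0)

/-- Joint law of the `n` multinoulli trials together with an independent coordinate
`z` drawn uniformly from `{1, …, S}` (i.e., uniformly among the basis vectors). -/
def simpleLaw {S : ℕ} (p : Fin S → ℝ) (n : ℕ) : Measure ((Fin n → Fin S) × Fin S) :=
  (trialsLaw p n).prod (((S : ENNReal))⁻¹ • Measure.count)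


/-! ### Auxiliary lemmas for the proof of `stmt_12` -/

open scoped Classical in
lemma my_catMeasure_apply {S : ℕ} (p : Fin S → ℝ) (A : Set (Fin S)) :
    catMeasure p A = ∑ i ∈ Finset.univ.filter (· ∈ A), ENNReal.ofReal (p i) := by
  rw [catMeasure, Measure.finset_sum_apply]
  rw [Finset.sum_filter]
  congr 1
  ext i
  by_cases hi : i ∈ A <;> simp [Measure.smul_apply, Measure.dirac_apply' _ (by trivial : MeasurableSet A),
    Set.indicator, hi]

lemma my_catMeasure_singleton {S : ℕ} (p : Fin S → ℝ) (k : Fin S) :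
    catMeasure p {k} = ENNReal.ofReal (p k) := by
  classical
  rw [my_catMeasure_apply]
  simp [Finset.sum_filter, Finset.sum_ite_eq']

instance {S : ℕ} (p : Fin S → ℝ) : IsFiniteMeasure (catMeasure p) := by
  constructor
  classical
  rw [my_catMeasure_apply]
  exact ENNReal.sum_lt_top.2 (fun i _ => ENNReal.ofReal_lt_top)

lemma my_catMeasure_isProb {S : ℕ} (p : Fin S → ℝ) (hp : p ∈ stdSimplex ℝ (Fin S)) :
    IsProbabilityMeasure (catMeasure p) := by
  constructor
  classical
  rw [my_catMeasure_apply]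
  simp only [Set.mem_univ, Finset.filter_true]
  rw [← ENNReal.ofReal_sum_of_nonneg (fun i _ => hp.1 i), hp.2, ENNReal.ofReal_one]

lemma my_trialsLaw_singleton {S n : ℕ} (p : Fin S → ℝ) (hp0 : ∀ i, 0 ≤ p i) (x : Fin n → Fin S) :
    trialsLaw p n {x} = ENNReal.ofReal (∏ j, p (x j)) := by
  rw [trialsLaw, ← Set.univ_pi_singleton x, Measure.pi_pi]
  simp_rw [my_catMeasure_singleton]
  rw [← ENNReal.ofReal_prod_of_nonneg (fun j _ => hp0 (x j))]

open scoped Classical in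
lemma my_trialsLaw_apply {S n : ℕ} (p : Fin S → ℝ) (hp0 : ∀ i, 0 ≤ p i) (A : Set (Fin n → Fin S)) :
    trialsLaw p n A = ENNReal.ofReal (∑ x ∈ Finset.univ.filter (· ∈ A), ∏ j, p (x j)) := by
  have hA : A = ⋃ x ∈ (Finset.univ.filter (· ∈ A) : Finset (Fin n → Fin S)), ({x} : Set (Fin n → Fin S)) := by
    ext y; simp
  rw [hA, measure_biUnion_finset]
  · simp_rw [my_trialsLaw_singleton p hp0]
    rw [← ENNReal.ofReal_sum_of_nonneg (fun x _ => Finset.prod_nonneg (fun j _ => hp0 (x j)))]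
    congr 1
    apply Finset.sum_congr _ (fun _ _ => rfl)
    ext y; simp
  · intro a _ b _ hab
    simp [Function.onFun, Set.disjoint_singleton, hab]
  · intro x _
    exact measurableSet_singleton x

lemma my_aux_exp_le (y : ℝ) (hy : 0 ≤ y) : (2 - y) * Real.exp y ≤ 2 + y := by
  set g : ℝ → ℝ := fun t => 2 + t - (2 - t) * Real.exp t with hg
  have hderiv : ∀ t : ℝ, HasDerivAt g (1 - (1 - t) * Real.exp t) t := by
    intro t
    have h1 : HasDerivAt (fun t : ℝ => 2 + t) 1 t := by
      simpa using (hasDerivAt_id t).const_add (2:ℝ)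
    have h2 : HasDerivAt (fun t : ℝ => (2 - t) * Real.exp t) ((-1) * Real.exp t + (2 - t) * Real.exp t) t :=
      (((hasDerivAt_id t).const_sub (2:ℝ))).mul (Real.hasDerivAt_exp t)
    have := h1.sub h2
    exact this.congr_deriv (by ring)
  have hmono : MonotoneOn g (Set.Ici (0:ℝ)) := by
    apply monotoneOn_of_deriv_nonneg (convex_Ici 0)
    · exact (Continuous.sub (by continuity) (by continuity)).continuousOn
    · intro t ht
      exact (hderiv t).differentiableAt.differentiableWithinAt
    · intro t ht
      rw [(hderiv t).deriv]
      have : (1 - t) * Real.exp t ≤ 1 := by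
        have h := Real.add_one_le_exp (-t)
        have hep : 0 < Real.exp t := Real.exp_pos t
        nlinarith [Real.exp_neg t ▸ h, mul_pos hep (Real.exp_pos (-t)), Real.exp_pos (-t),
          (by rw [← Real.exp_add]; simp : Real.exp t * Real.exp (-t) = 1)]
      linarith
  have h0 : g 0 = 0 := by simp [hg]
  have := hmono (Set.self_mem_Ici) (Set.mem_Ici.2 hy) hy
  rw [h0] at this
  simpa [hg] using this

lemma my_pade_log (x : ℝ) (hx : 0 ≤ x) : 2 * x / (2 + x) ≤ Real.log (1 + x) := by
  have h2x : (0:ℝ) < 2 + x := by linarith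
  set y := 2 * x / (2 + x) with hy
  have hy0 : 0 ≤ y := by positivity
  have hylt : y < 2 := by rw [hy, div_lt_iff₀ h2x]; linarith
  have hexp : Real.exp y ≤ (2 + y) / (2 - y) := by
    have := my_aux_exp_le y hy0
    rw [le_div_iff₀ (by linarith : (0:ℝ) < 2 - y)]
    linarith [this]
  have heq : (2 + y) / (2 - y) = 1 + x := by
    rw [hy]; field_simp; ring
  have h1x : (0:ℝ) < 1 + x := by linarith
  rw [← Real.exp_le_exp, Real.exp_log h1x]
  calc Real.exp y ≤ (2+y)/(2-y) := hexp
    _ = 1 + x := heq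

open scoped Classical in
set_option maxHeartbeats 2000000 in
lemma my_chernoff_core {S n : ℕ} (hS : 1 ≤ S) (hn : 1 ≤ n) (p : Fin S → ℝ)
    (hp0 : ∀ i, 0 ≤ p i) (hp1 : ∑ i, p i = 1) (i : Fin S) :
    ∑ x ∈ Finset.univ.filter (fun x : Fin n → Fin S => p i < pminus x i), ∏ j, p (x j)
      ≤ 1 / (4 * S) := by
  obtain ⟨L, hLdef⟩ : ∃ L, Real.log (4 * (S:ℝ)) = L := ⟨_, rfl⟩
  have hS1 : (1:ℝ) ≤ S := by exact_mod_cast hS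
  have hL : 0 < L := hLdef ▸ Real.log_pos (by linarith)
  have hn' : (0:ℝ) < n := by exact_mod_cast hn
  have hWnn : ∀ x : Fin n → Fin S, 0 ≤ ∏ j, p (x j) :=
    fun x => Finset.prod_nonneg fun j _ => hp0 (x j)
  by_cases hpi : p i = 0
  · -- all terms vanish
    have : ∀ x ∈ Finset.univ.filter (fun x : Fin n → Fin S => p i < pminus x i),
        ∏ j, p (x j) = 0 := by
      intro x hx
      rw [Finset.mem_filter] at hx
      have hx' := hx.2
      have hed : 0 < empDist x i := by
        have hsq : 0 ≤ Real.sqrt (3 * empDist x i * L / n) := Real.sqrt_nonneg _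
        have h3L : 0 < 3 * L / n := by positivity
        rw [pminus, hpi, hLdef] at hx'
        -- hx' : 0 < empDist - (sqrt + 3L/n)
        nlinarith [hx']
      have hcard : 0 < (Finset.univ.filter fun j => x j = i).card := by
        by_contra hc
        push_neg at hc
        interval_cases h : (Finset.univ.filter fun j => x j = i).card
        · rw [empDist, h] at hed; simp at hed
      obtain ⟨j, hj⟩ := Finset.card_pos.1 hcard
      rw [Finset.mem_filter] at hj
      exact Finset.prod_eq_zero (Finset.mem_univ j) (by rw [hj.2, hpi])
    rw [Finset.sum_eq_zero this]
    positivity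
  · have hpi' : 0 < p i := lt_of_le_of_ne (hp0 i) (Ne.symm hpi)
    obtain ⟨P, hPdef⟩ : ∃ P, p i = P := ⟨_, rfl⟩
    rw [hPdef] at hpi'
    obtain ⟨q, hqdef⟩ : ∃ q, Real.sqrt (9*L^2 + 12*n*P*L) = q := ⟨_, rfl⟩
    have hq0 : 0 ≤ q := hqdef ▸ Real.sqrt_nonneg _
    have hqsq : q^2 = 9*L^2 + 12*n*P*L := by rw [← hqdef]; exact Real.sq_sqrt (by positivity)
    have hq3 : 3*L ≤ q := by
      rw [← hqdef]
      have : Real.sqrt ((3*L)^2) ≤ Real.sqrt (9*L^2 + 12*n*P*L) := by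
        apply Real.sqrt_le_sqrt; nlinarith [mul_nonneg (mul_nonneg hn'.le hpi'.le) hL.le]
      rwa [Real.sqrt_sq (by positivity)] at this
    obtain ⟨u, hudef⟩ : ∃ u, (3*L + q)/(2*n) = u := ⟨_, rfl⟩
    have hu0 : 0 < u := by rw [← hudef]; positivity
    have hun : u * (2*n) = 3*L + q := by
      rw [← hudef]; field_simp
    have key : n * u^2 = 3*L*P + 3*L*u := by
      have h2n : (0:ℝ) < 2*n := by positivity
      have : (n * u^2) * (4*n) = (3*L*P + 3*L*u) * (4*n) := by
        nlinarith [hun, hqsq]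
      exact mul_right_cancel₀ (by positivity) this
    have hnu : 3*L ≤ n*u := by nlinarith [hun, hq3]
    -- threshold claim
    have claim : ∀ x : Fin n → Fin S, p i < pminus x i →
        n*(P+u) ≤ ((Finset.univ.filter fun j => x j = i).card : ℝ) := by
      intro x hx
      obtain ⟨e, hedef⟩ : ∃ e, empDist x i = e := ⟨_, rfl⟩
      obtain ⟨v, hvdef⟩ : ∃ v, e - P = v := ⟨_, rfl⟩
      have he0 : 0 ≤ e := by rw [← hedef, empDist]; positivity
      have hsq0 : 0 ≤ 3*e*L/n := by positivity
      have h1 : Real.sqrt (3*e*L/n) < v - 3*L/n := by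
        rw [pminus, hLdef, hedef, hPdef] at hx
        rw [← hvdef]
        linarith [hx]
      have h2 : 0 < v - 3*L/n := lt_of_le_of_lt (Real.sqrt_nonneg _) h1
      have h3 : 3*e*L/n < (v - 3*L/n)^2 := by
        have := mul_self_lt_mul_self (Real.sqrt_nonneg (3*e*L/n)) h1
        rwa [Real.mul_self_sqrt hsq0, ← sq] at this
      have hev : e = P + v := by rw [← hvdef]; ring
      have hv3 : 3*L/n < v := by linarith
      have hvpos : 0 < v := lt_trans (by positivity) hv3
      have h3' : 3*e*L < ((v - 3*L/n)^2) * n := by rwa [div_lt_iff₀ hn'] at h3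
      have hexpand : ((v - 3*L/n)^2) * n = n*v^2 - 6*L*v + 9*L^2/n := by
        field_simp
        ring
      have h9 : 9*L^2/n < 3*L*v := by
        rw [div_lt_iff₀ hn']
        have h3n : 3*L < v*n := by rwa [div_lt_iff₀ hn'] at hv3
        nlinarith [h3n, hL]
      have hv : 3*L*P + 3*L*v < n*v^2 := by
        have he2 : 3*e*L = 3*L*P + 3*L*v := by rw [hev]; ring
        rw [he2, hexpand] at h3'
        have h3Lv : 0 < 3*L*v := by positivity
        linarith
      have huv : u ≤ v := by
        by_contra hc
        push_neg at hc
        have hsum : 3*L < n*(v+u) := by nlinarith [hv3, hnu, mul_pos hn' hu0]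
        nlinarith [mul_pos (sub_pos.2 hc) (sub_pos.2 hsum), key, hv]
      have hce : ((Finset.univ.filter fun j => x j = i).card : ℝ) = n * e := by
        rw [← hedef, empDist]
        rw [mul_div_assoc', eq_div_iff hn'.ne', mul_comm]
      rw [hce, hev]
      nlinarith [huv]
    -- Chernoff
    obtain ⟨lam, hlamdef⟩ : ∃ lam, Real.log ((P+u)/P) = lam := ⟨_, rfl⟩
    have hratio : (1:ℝ) ≤ (P+u)/P := by
      rw [le_div_iff₀ hpi']; linarith
    have hlam0 : 0 ≤ lam := hlamdef ▸ Real.log_nonneg hratio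
    have helam : Real.exp lam = (P+u)/P := by rw [← hlamdef]; exact Real.exp_log (by positivity)
    obtain ⟨a, hadef⟩ : ∃ a, n*(P+u) = a := ⟨_, rfl⟩
    set g : Fin S → ℝ := fun k => p k * (if k = i then Real.exp lam else 1) with hgdef
    have hprodg : ∀ x : Fin n → Fin S,
        ∏ j, g (x j) = (∏ j, p (x j)) * Real.exp lam ^ ((Finset.univ.filter fun j => x j = i).card) := by
      intro x
      rw [hgdef]
      rw [Finset.prod_mul_distrib]
      congr 1
      rw [← Finset.prod_filter_mul_prod_filter_not Finset.univ (fun j => x j = i)]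
      rw [Finset.prod_congr rfl (fun j hj => if_pos (Finset.mem_filter.1 hj).2),
        Finset.prod_const]
      rw [Finset.prod_congr rfl (fun j hj => if_neg (Finset.mem_filter.1 hj).2),
        Finset.prod_const_one, mul_one]
    have hgsum : ∑ k, g k = 1 + u := by
      have : ∀ k, g k = p k + (if k = i then u else 0) := by
        intro k
        simp only [hgdef]
        by_cases hk : k = i
        · rw [if_pos hk, if_pos hk, hk, helam, hPdef]
          field_simp
        · rw [if_neg hk, if_neg hk, mul_one, add_zero]
      simp_rw [this]
      rw [Finset.sum_add_distrib, hp1, Finset.sum_ite_eq' Finset.univ i (fun _ => u)]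
      simp
    -- main chain
    have hterm : ∀ x ∈ Finset.univ.filter (fun x : Fin n → Fin S => p i < pminus x i),
        ∏ j, p (x j) ≤ Real.exp (-(lam*a)) * ∏ j, g (x j) := by
      intro x hx
      rw [Finset.mem_filter] at hx
      rw [hprodg x]
      set c : ℕ := (Finset.univ.filter fun j => x j = i).card with hcdef
      have hc : a ≤ (c:ℝ) := hadef ▸ claim x hx.2
      have hpow : Real.exp lam ^ c = Real.exp (lam * c) := by
        rw [mul_comm, Real.exp_nat_mul]
      rw [hpow, ← mul_assoc, mul_comm (Real.exp (-(lam*a))) _, mul_assoc, ← Real.exp_add]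
      apply le_mul_of_one_le_right (hWnn x)
      rw [← Real.exp_zero]
      apply Real.exp_le_exp.2
      nlinarith [mul_le_mul_of_nonneg_left hc hlam0]
    calc ∑ x ∈ Finset.univ.filter (fun x : Fin n → Fin S => p i < pminus x i), ∏ j, p (x j)
        ≤ ∑ x ∈ Finset.univ.filter (fun x : Fin n → Fin S => p i < pminus x i),
            Real.exp (-(lam*a)) * ∏ j, g (x j) := Finset.sum_le_sum hterm
      _ ≤ ∑ x : Fin n → Fin S, Real.exp (-(lam*a)) * ∏ j, g (x j) := by
          apply Finset.sum_le_sum_of_subset_of_nonneg (Finset.filter_subset _ _)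
          intro x _ _
          have : 0 ≤ ∏ j, g (x j) := Finset.prod_nonneg fun j _ => by
            rw [hgdef]
            apply mul_nonneg (hp0 _)
            split <;> positivity
          positivity
      _ = Real.exp (-(lam*a)) * (∑ k, g k)^n := by
          rw [← Finset.mul_sum, Fintype.sum_pow]
      _ = Real.exp (-(lam*a)) * (1+u)^n := by rw [hgsum]
      _ ≤ Real.exp (-(lam*a)) * Real.exp (n*u) := by
          apply mul_le_mul_of_nonneg_left _ (Real.exp_nonneg _)
          calc (1+u)^n ≤ Real.exp u ^ n := by
                apply pow_le_pow_left₀ (by linarith) (by linarith [Real.add_one_le_exp u])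
            _ = Real.exp (n*u) := by rw [Real.exp_nat_mul]
      _ = Real.exp (n*u - lam*a) := by rw [← Real.exp_add]; congr 1; ring
      _ ≤ Real.exp (-L) := by
          apply Real.exp_le_exp.2
          -- need n*u - lam*(n*(P+u)) ≤ -L
          have hpade : 2*(u/P)/(2+(u/P)) ≤ lam := by
            rw [← hlamdef, show (P+u)/P = 1 + u/P by field_simp]
            exact my_pade_log (u/P) (by positivity)
          have hden : 0 < 2*P + u := by positivity
          have h1 : 2*u/(2*P+u) ≤ lam := by
            have : 2*(u/P)/(2+(u/P)) = 2*u/(2*P+u) := by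
              rw [div_eq_div_iff (by positivity) (by positivity)]
              field_simp
            rwa [this] at hpade
          have h3 : 2*u ≤ lam*(2*P+u) := by
            rw [div_le_iff₀ hden] at h1
            linarith
          have h4 : (n*u + L)*(2*P+u) ≤ 2*u*(n*(P+u)) := by
            nlinarith [key, mul_nonneg hL.le hpi'.le, mul_nonneg hL.le hu0.le]
          have h5 : 2*u*(n*(P+u)) ≤ lam*(n*(P+u))*(2*P+u) := by
            have hna : 0 ≤ n*(P+u) := by positivity
            calc 2*u*(n*(P+u)) = (2*u)*(n*(P+u)) := by ring
              _ ≤ (lam*(2*P+u))*(n*(P+u)) := mul_le_mul_of_nonneg_right h3 hna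
              _ = lam*(n*(P+u))*(2*P+u) := by ring
          have h6 : (n*u + L)*(2*P+u) ≤ lam*(n*(P+u))*(2*P+u) := h4.trans h5
          have h7 : n*u + L ≤ lam*(n*(P+u)) := le_of_mul_le_mul_right (by linarith [h6]) hden
          rw [← hadef]
          linarith
      _ = 1/(4*S) := by
          rw [Real.exp_neg, ← hLdef, Real.exp_log (by positivity), one_div]

lemma my_optimism_det {S n : ℕ} (p h : Fin S → ℝ) (hp1 : ∑ i, p i = 1)
    (x : Fin n → Fin S) (z : Fin S) (hmax : ∀ i, h i ≤ h z)
    (hE : ∀ i, pminus x i ≤ p i) :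
    ∑ i, p i * h i ≤ ∑ i, ptilde x z i * h i := by
  have hsplit : ∑ i, ptilde x z i * h i
      = (∑ i, pminus x i * h i) + (1 - ∑ j, pminus x j) * h z := by
    have : ∀ i, ptilde x z i * h i
        = pminus x i * h i + (if i = z then (1 - ∑ j, pminus x j) * h i else 0) := by
      intro i
      rw [ptilde]
      by_cases hi : i = z
      · rw [if_pos hi, if_pos hi]; ring
      · rw [if_neg hi, if_neg hi]; ring
    simp_rw [this]
    rw [Finset.sum_add_distrib, Finset.sum_ite_eq' Finset.univ z]
    simp
  rw [hsplit]
  have hkey : ∑ i, (p i - pminus x i) * h i ≤ ∑ i, (p i - pminus x i) * h z := by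
    apply Finset.sum_le_sum
    intro i _
    exact mul_le_mul_of_nonneg_left (hmax i) (sub_nonneg.2 (hE i))
  have hLs : ∑ i, (p i - pminus x i) * h i = (∑ i, p i * h i) - ∑ i, pminus x i * h i := by
    rw [← Finset.sum_sub_distrib]
    congr 1; ext i; ring
  have hRs : ∑ i, (p i - pminus x i) * h z = (1 - ∑ j, pminus x j) * h z := by
    rw [← Finset.sum_mul, Finset.sum_sub_distrib, hp1]
  rw [hLs, hRs] at hkey
  linarith


/-- Optimism of the simple optimistic sample (Lemma `optimismSmallN` of the paper). -/
theorem stmt_12 (S n : ℕ) (hS : 1 ≤ S) (hn : 1 ≤ n) (D : ℝ) (hD : 0 < D)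
    (p : Fin S → ℝ) (hp : p ∈ stdSimplex ℝ (Fin S))
    (h : Fin S → ℝ) (hh : ∀ i, h i ∈ Set.Icc (0 : ℝ) D) :
    ENNReal.ofReal (1 / (2 * S)) ≤
      simpleLaw p n
        {y | ∑ i, p i * h i ≤ ∑ i, ptilde y.1 y.2 i * h i} := by
  classical
  have hp0 : ∀ i, 0 ≤ p i := fun i => hp.1 i
  have hp1 : ∑ i, p i = 1 := hp.2
  have hS0 : (0:ℝ) < S := by exact_mod_cast Nat.lt_of_lt_of_le Nat.zero_lt_one hS
  have hSne : (S:ℝ) ≠ 0 := ne_of_gt hS0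
  obtain ⟨z, _, hz⟩ := Finset.exists_max_image (Finset.univ : Finset (Fin S)) h
    ⟨⟨0, hS⟩, Finset.mem_univ _⟩
  haveI : IsProbabilityMeasure (catMeasure p) := my_catMeasure_isProb p hp
  haveI : IsProbabilityMeasure (trialsLaw p n) := by
    unfold trialsLaw; infer_instance
  set E : Set (Fin n → Fin S) := {x | ∀ i, pminus x i ≤ p i} with hEdef
  have hsub : (E ×ˢ ({z} : Set (Fin S)))
      ⊆ {y : (Fin n → Fin S) × Fin S | ∑ i, p i * h i ≤ ∑ i, ptilde y.1 y.2 i * h i} := by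
    rintro ⟨x, w⟩ ⟨hx, hw⟩
    simp only [Set.mem_singleton_iff] at hw
    simp only [Set.mem_setOf_eq]
    rw [hw]
    exact my_optimism_det p h hp1 x z (fun i => hz i (Finset.mem_univ i)) hx
  have hBle : ∀ i : Fin S, trialsLaw p n {x : Fin n → Fin S | p i < pminus x i}
      ≤ ENNReal.ofReal (1/(4*S)) := by
    intro i
    rw [my_trialsLaw_apply p hp0]
    apply ENNReal.ofReal_le_ofReal
    have hfe : Finset.univ.filter (· ∈ {x : Fin n → Fin S | p i < pminus x i})
        = Finset.univ.filter (fun x : Fin n → Fin S => p i < pminus x i) := by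
      ext y; simp
    rw [hfe]
    exact my_chernoff_core hS hn p hp0 hp1 i
  have hEc : trialsLaw p n Eᶜ ≤ ENNReal.ofReal (1/4) := by
    have hcup : Eᶜ ⊆ ⋃ i : Fin S, {x : Fin n → Fin S | p i < pminus x i} := by
      intro x hx
      simp only [hEdef, Set.mem_compl_iff, Set.mem_setOf_eq, not_forall] at hx
      obtain ⟨i, hi⟩ := hx
      exact Set.mem_iUnion.2 ⟨i, not_le.1 hi⟩
    calc trialsLaw p n Eᶜ ≤ trialsLaw p n (⋃ i : Fin S, {x : Fin n → Fin S | p i < pminus x i}) :=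
          measure_mono hcup
      _ ≤ ∑' i : Fin S, trialsLaw p n {x : Fin n → Fin S | p i < pminus x i} :=
          measure_iUnion_le _
      _ = ∑ i : Fin S, trialsLaw p n {x : Fin n → Fin S | p i < pminus x i} := tsum_fintype _
      _ ≤ ∑ i : Fin S, ENNReal.ofReal (1/(4*(S:ℝ))) := Finset.sum_le_sum (fun i _ => hBle i)
      _ = (S : ENNReal) * ENNReal.ofReal (1/(4*S)) := by
          rw [Finset.sum_const, Finset.card_univ, Fintype.card_fin, nsmul_eq_mul]
      _ = ENNReal.ofReal (S : ℝ) * ENNReal.ofReal (1/(4*S)) := by rw [ENNReal.ofReal_natCast]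
      _ = ENNReal.ofReal ((S : ℝ) * (1/(4*S))) := (ENNReal.ofReal_mul (by positivity)).symm
      _ = ENNReal.ofReal (1/4) := by
          rw [show (S:ℝ) * (1/(4*(S:ℝ))) = 1/4 by field_simp]
  have hE2 : ENNReal.ofReal (1/2) ≤ trialsLaw p n E := by
    have h1 : (1:ENNReal) ≤ trialsLaw p n E + trialsLaw p n Eᶜ := by
      rw [← measure_univ (μ := trialsLaw p n), ← Set.union_compl_self E]
      exact measure_union_le _ _
    have h2 : (1:ENNReal) - ENNReal.ofReal (1/4) ≤ trialsLaw p n E := by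
      rw [tsub_le_iff_right]
      exact h1.trans (add_le_add_right hEc _)
    calc ENNReal.ofReal (1/2) ≤ 1 - ENNReal.ofReal (1/4) := by
          rw [← ENNReal.ofReal_one, ← ENNReal.ofReal_sub _ (by norm_num : (0:ℝ) ≤ 1/4)]
          exact ENNReal.ofReal_le_ofReal (by norm_num)
      _ ≤ _ := h2
  calc ENNReal.ofReal (1 / (2*S)) = ENNReal.ofReal (1/2) * ENNReal.ofReal (1/(S:ℝ)) := by
        rw [← ENNReal.ofReal_mul (by norm_num)]
        congr 1
        rw [div_mul_div_comm]
        norm_num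
    _ = ENNReal.ofReal (1/2) * (S:ENNReal)⁻¹ := by
        congr 1
        rw [one_div, ENNReal.ofReal_inv_of_pos hS0, ENNReal.ofReal_natCast]
    _ ≤ trialsLaw p n E * (S:ENNReal)⁻¹ := mul_le_mul_left hE2 _
    _ = trialsLaw p n E * ((((S : ENNReal))⁻¹ • Measure.count) ({z} : Set (Fin S))) := by
        rw [Measure.smul_apply, Measure.count_singleton, smul_eq_mul, mul_one]
    _ = simpleLaw p n (E ×ˢ ({z} : Set (Fin S))) := by
        rw [simpleLaw, Measure.prod_prod]
    _ ≤ simpleLaw p n {y : (Fin n → Fin S) × Fin S |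
          ∑ i, p i * h i ≤ ∑ i, ptilde y.1 y.2 i * h i} := measure_mono hsub
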